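/- The Kovalevskaya matrix of the undeformed DGR system at the point I₃ = (−2,0,4,0), namely the 4×4 matrix K(I₃) with rows (2,0,1,0), (0,2,0,−1/3), (12,0,3,0), (0,−6,0,3), has characteristic polynomial (X−1)(X−4)(X−6)(X+1); and at the point I₂ = (−18,−24,36,−144), the Kovalevskaya matrix K(I₂) with rows (2,0,1,0), (0,2,0,−1/3), (108,−72,3,0), (−72,18,0,3) has characteristic polynomial (X−6)(X−12)(X+1)(X+7). In particular the Kovalevskaya exponents at I₃ are {1,4,6,−1} and at I₂ are {6,12,−1,−7}. -/

import Mathlib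

open Polynomial

/-- The Kovalevskaya matrix of the undeformed DGR system at I₃ = (−2,0,4,0). -/
noncomputable def K₃ : Matrix (Fin 4) (Fin 4) ℂ :=
  !![2, 0, 1, 0;
     0, 2, 0, -1/3;
     12, 0, 3, 0;
     0, -6, 0, 3]

/-- The Kovalevskaya matrix of the undeformed DGR system at I₂ = (−18,−24,36,−144). -/
noncomputable def K₂ : Matrix (Fin 4) (Fin 4) ℂ :=
  !![2, 0, 1, 0;
     0, 2, 0, -1/3;
     108, -72, 3, 0;
     -72, 18, 0, 3]

lemma roots_four (a b c d : ℂ) :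
    ((X - C a) * (X - C b) * (X - C c) * (X - C d)).roots = {a, b, c, d} := by
  have h1 : (X - C a : ℂ[X]) ≠ 0 := X_sub_C_ne_zero a
  have h2 : (X - C b : ℂ[X]) ≠ 0 := X_sub_C_ne_zero b
  have h3 : (X - C c : ℂ[X]) ≠ 0 := X_sub_C_ne_zero c
  have h4 : (X - C d : ℂ[X]) ≠ 0 := X_sub_C_ne_zero d
  rw [roots_mul (mul_ne_zero (mul_ne_zero (mul_ne_zero h1 h2) h3) h4),
    roots_mul (mul_ne_zero (mul_ne_zero h1 h2) h3), roots_mul (mul_ne_zero h1 h2)]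
  simp [roots_X_sub_C]

/-- the characteristic polynomial of K(I₃) is (X−1)(X−4)(X−6)(X+1)
and that of K(I₂) is (X−6)(X−12)(X+1)(X+7); in particular the Kovalevskaya
exponents at I₃ are {1,4,6,−1} and at I₂ are {6,12,−1,−7}. -/
theorem dgr_kovalevskaya_charpoly :
    (K₃.charpoly = (X - C 1) * (X - C 4) * (X - C 6) * (X + C 1) ∧
      K₂.charpoly = (X - C 6) * (X - C 12) * (X + C 1) * (X + C 7)) ∧
    K₃.charpoly.roots = {1, 4, 6, -1} ∧
    K₂.charpoly.roots = {6, 12, -1, -7} := by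
  have h3 : K₃.charpoly = (X - C 1) * (X - C 4) * (X - C 6) * (X + C 1) := by
    rw [Matrix.charpoly]
    apply Polynomial.funext
    intro x
    rw [Matrix.det_succ_row_zero]
    simp [Fin.sum_univ_succ, Matrix.det_fin_three, Matrix.charmatrix_apply, K₃,
      Matrix.one_apply, Matrix.submatrix_apply, Fin.succAbove, Matrix.diagonal_apply]
    ring
  have h2 : K₂.charpoly = (X - C 6) * (X - C 12) * (X + C 1) * (X + C 7) := by
    rw [Matrix.charpoly]
    apply Polynomial.funext
    intro x
    rw [Matrix.det_succ_row_zero]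
    simp [Fin.sum_univ_succ, Matrix.det_fin_three, Matrix.charmatrix_apply, K₂,
      Matrix.one_apply, Matrix.submatrix_apply, Fin.succAbove, Matrix.diagonal_apply]
    ring
  refine ⟨⟨h3, h2⟩, ?_, ?_⟩
  · rw [h3, show (X + C 1 : ℂ[X]) = X - C (-1) by simp]
    exact roots_four 1 4 6 (-1)
  · rw [h2, show (X + C 1 : ℂ[X]) = X - C (-1) by simp,
      show (X + C 7 : ℂ[X]) = X - C (-7) by simp]
    exact roots_four 6 12 (-1) (-7)
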